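/- arXiv:2403.13748 — 8 statements merged into one kernel-verified Lean document; each statement's English description precedes it below -/
import Mathlib

section
/- If Σ and Ψ are n×n positive definite real matrices, Ψ is diagonal, Σ is not diagonal, and the diagonal entries of Ψ⁻¹ equal those of Σ⁻¹, then det(Ψ) < det(Σ). -/
open Matrix Finset

/-- A positive definite matrix with unit trace-average `trace = n` and `M ≠ 1` has `det < 1`. -/
lemma det_lt_one_of_trace_eq_card {n : ℕ} {M : Matrix (Fin n) (Fin n) ℝ}
    (hM : M.PosDef) (htr : M.trace = n) (hne : M ≠ 1) : M.det < 1 := by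
  set ev := hM.1.eigenvalues with hev
  have hpos : ∀ i, 0 < ev i := hM.eigenvalues_pos
  have hdet : M.det = ∏ i, ev i := by
    simpa using hM.1.det_eq_prod_eigenvalues
  have htr' : ∑ i, ev i = n := by
    have hspec := hM.1.spectral_theorem
    have : M.trace = ∑ i, ev i := by
      conv_lhs => rw [hspec, Unitary.conjStarAlgAut_apply]
      rw [Matrix.trace_mul_cycle]
      rw [(Matrix.mem_unitaryGroup_iff').mp (hM.1.eigenvectorUnitary).2]
      simp [Matrix.trace_diagonal]
      rfl
    linarith [this, htr]
  have hex : ∃ i, ev i ≠ 1 := by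
    by_contra h
    push_neg at h
    apply hne
    have : Matrix.diagonal (RCLike.ofReal ∘ ev) = (1 : Matrix (Fin n) (Fin n) ℝ) := by
      have h1 : (RCLike.ofReal ∘ ev : Fin n → ℝ) = fun _ => 1 := funext fun i => by simp [h i]
      rw [h1]
      exact Matrix.diagonal_one
    rw [hM.1.spectral_theorem, this]
    exact map_one _
  obtain ⟨j, hj⟩ := hex
  have hlog : ∑ i, Real.log (ev i) < ∑ i, (ev i - 1) := by
    apply Finset.sum_lt_sum (fun i _ => Real.log_le_sub_one_of_pos (hpos i))
    exact ⟨j, Finset.mem_univ j, Real.log_lt_sub_one_of_pos (hpos j) hj⟩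
  have hsum0 : ∑ i, (ev i - 1) = 0 := by
    simp [Finset.sum_sub_distrib, htr']
  have hdetpos : 0 < M.det := hM.det_pos
  rw [← Real.log_neg_iff hdetpos]
  rw [hdet, Real.log_prod (fun i _ => (hpos i).ne')]
  linarith

theorem precision_matching_underestimates_generalized_variance
    (n : ℕ) (S Ψ : Matrix (Fin n) (Fin n) ℝ)
    (hS : S.PosDef) (hΨ : Ψ.PosDef)
    (hΨdiag : Ψ.IsDiag) (hSnotdiag : ¬ S.IsDiag)
    (hmatch : ∀ i, Ψ⁻¹ i i = S⁻¹ i i) :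
    Ψ.det < S.det := by
  classical
  set P := S⁻¹ with hPdef
  have hP : P.PosDef := hS.inv
  have hΨd : ∀ i, 0 < Ψ i i := by
    intro i
    have h := hΨ
    rw [← hΨdiag.diagonal_diag] at h
    simpa using (Matrix.posDef_diagonal_iff.mp h) i
  have hΨinv : Ψ⁻¹ = Matrix.diagonal (fun i => (Ψ i i)⁻¹) := by
    apply Matrix.inv_eq_right_inv
    nth_rewrite 1 [← hΨdiag.diagonal_diag]
    rw [Matrix.diagonal_mul_diagonal]
    have hfun : (fun i => Ψ.diag i * (Ψ i i)⁻¹) = fun _ => (1:ℝ) :=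
      funext fun i => mul_inv_cancel₀ (hΨd i).ne'
    rw [hfun]
    exact Matrix.diagonal_one
  have hinv : ∀ i, Ψ⁻¹ i i = (Ψ i i)⁻¹ := by
    intro i
    rw [hΨinv, Matrix.diagonal_apply_eq]
  have hPdiag : ∀ i, P i i = (Ψ i i)⁻¹ := fun i => by rw [← hmatch i, hinv i]
  set g : Fin n → ℝ := fun i => Real.sqrt (Ψ i i) with hgdef
  have hg : ∀ i, 0 < g i := fun i => Real.sqrt_pos.mpr (hΨd i)
  have hg2 : ∀ i, g i * g i = Ψ i i := fun i => Real.mul_self_sqrt (hΨd i).le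
  set D := Matrix.diagonal g with hDdef
  set M := D * P * D with hMdef
  have hDh : D.conjTranspose = D := by
    rw [hDdef, Matrix.diagonal_conjTranspose]
    congr 1
  have hMsym : M.IsHermitian := by
    show M.conjTranspose = M
    rw [hMdef, Matrix.conjTranspose_mul, Matrix.conjTranspose_mul, hDh, hP.1.eq, mul_assoc]
  have hMij : ∀ i j, M i j = g i * P i j * g j := by
    intro i j
    rw [hMdef, hDdef, Matrix.mul_diagonal, Matrix.diagonal_mul]
  have hMpd : M.PosDef := by
    refine Matrix.PosDef.of_dotProduct_mulVec_pos hMsym fun x hx => ?_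
    have hDx : D *ᵥ x ≠ 0 := by
      intro h0
      apply hx
      funext i
      have h1 := congrFun h0 i
      rw [hDdef, Matrix.mulVec_diagonal] at h1
      exact (mul_eq_zero.mp h1).resolve_left (hg i).ne'
    have key : star x ⬝ᵥ (M *ᵥ x) = star (D *ᵥ x) ⬝ᵥ (P *ᵥ (D *ᵥ x)) := by
      rw [hMdef, ← Matrix.mulVec_mulVec, ← Matrix.mulVec_mulVec, Matrix.dotProduct_mulVec]
      congr 1
      funext i
      simp [hDdef, Matrix.vecMul_diagonal, Matrix.mulVec_diagonal, mul_comm]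
    rw [key]
    exact hP.dotProduct_mulVec_pos hDx
  have hMdiag : ∀ i, M i i = 1 := by
    intro i
    rw [hMij i i, hPdiag i]
    calc g i * (Ψ i i)⁻¹ * g i = (g i * g i) * (Ψ i i)⁻¹ := by ring
    _ = 1 := by rw [hg2 i]; exact mul_inv_cancel₀ (hΨd i).ne'
  have htr : M.trace = n := by
    simp [Matrix.trace, Matrix.diag, hMdiag]
  have hSinvinv : P⁻¹ = S := by
    rw [hPdef]
    exact Matrix.nonsing_inv_nonsing_inv S hS.det_pos.ne'.isUnit
  have hMne : M ≠ 1 := by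
    intro h1
    apply hSnotdiag
    have hPdg : P.IsDiag := by
      intro i j hij
      have h2 := congrFun (congrFun h1 i) j
      rw [hMij i j, Matrix.one_apply_ne hij] at h2
      rcases mul_eq_zero.mp h2 with h3 | h3
      · exact (mul_eq_zero.mp h3).resolve_left (hg i).ne'
      · exact absurd h3 (hg j).ne'
    rw [← hSinvinv, ← hPdg.diagonal_diag, Matrix.inv_diagonal]
    exact Matrix.isDiag_diagonal _
  have hdetΨ : Ψ.det = ∏ i, Ψ i i := by
    conv_lhs => rw [← hΨdiag.diagonal_diag]
    rw [Matrix.det_diagonal]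
    rfl
  have hdetM : M.det = Ψ.det * P.det := by
    rw [hMdef, Matrix.det_mul, Matrix.det_mul, hDdef, Matrix.det_diagonal, hdetΨ]
    calc (∏ i, g i) * P.det * (∏ i, g i) = ((∏ i, g i) * (∏ i, g i)) * P.det := by ring
    _ = (∏ i, g i * g i) * P.det := by rw [← Finset.prod_mul_distrib]
    _ = (∏ i, Ψ i i) * P.det := by
          rw [Finset.prod_congr rfl (fun i _ => hg2 i)]
  have hdetP : P.det = (S.det)⁻¹ := by
    rw [hPdef, Matrix.det_nonsing_inv, Ring.inverse_eq_inv']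
  have hlt : M.det < 1 := det_lt_one_of_trace_eq_card hMpd htr hMne
  rw [hdetM, hdetP, ← div_eq_mul_inv, div_lt_one hS.det_pos] at hlt
  exact hlt
end

section
/- If Σ and Ψ are n×n positive definite real matrices with Ψ diagonal, Σ not diagonal, and det(Ψ) = det(Σ), then there exists an index i with Ψ_{ii} < Σ_{ii} and an index j with (Ψ⁻¹)_{jj} < (Σ⁻¹)_{jj}. -/
open Matrix Finset

lemma posdef_diag_pos {n : ℕ} {A : Matrix (Fin n) (Fin n) ℝ} (hA : A.PosDef) (i : Fin n) :
    0 < A i i := by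
  have := hA.dotProduct_mulVec_pos (x := Pi.single i 1) (by simp [Pi.single_eq_same, Function.ne_iff])
  simpa [dotProduct, mulVec, Pi.single_apply] using this

lemma hadamard_strict {n : ℕ} {A : Matrix (Fin n) (Fin n) ℝ} (hA : A.PosDef)
    (hnd : ¬ A.IsDiag) : A.det < ∏ i, A i i := by
  classical
  set d : Fin n → ℝ := fun i => Real.sqrt (A i i) with hd
  have hdpos : ∀ i, 0 < d i := fun i => Real.sqrt_pos.mpr (posdef_diag_pos hA i)
  have hdsq : ∀ i, d i * d i = A i i := fun i => Real.mul_self_sqrt (posdef_diag_pos hA i).le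
  set E : Matrix (Fin n) (Fin n) ℝ := Matrix.diagonal (fun i => (d i)⁻¹) with hE
  set C : Matrix (Fin n) (Fin n) ℝ := E * A * E with hC
  have hEH : Eᴴ = E := by
    simp [hE, Matrix.diagonal_conjTranspose]
  have hCsd : C.PosSemidef := by
    have := hA.posSemidef.mul_mul_conjTranspose_same E
    rwa [hEH] at this
  have hCapp : ∀ i j, C i j = (d i)⁻¹ * A i j * (d j)⁻¹ := by
    intro i j
    simp [hC, hE, Matrix.diagonal_mul, Matrix.mul_diagonal]
  have hCdiag : ∀ i, C i i = 1 := by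
    intro i
    rw [hCapp, ← hdsq i]
    have := (hdpos i).ne'
    field_simp
  -- A = F * C * F, F = diagonal d
  have hA_eq : A = Matrix.diagonal d * C * Matrix.diagonal d := by
    rw [hC, hE]
    rw [show Matrix.diagonal d * (Matrix.diagonal (fun i => (d i)⁻¹) * A *
        Matrix.diagonal (fun i => (d i)⁻¹)) * Matrix.diagonal d
      = (Matrix.diagonal d * Matrix.diagonal (fun i => (d i)⁻¹)) * A *
        (Matrix.diagonal (fun i => (d i)⁻¹) * Matrix.diagonal d) by simp only [mul_assoc]]
    rw [Matrix.diagonal_mul_diagonal, Matrix.diagonal_mul_diagonal]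
    have h1 : (fun i => d i * (d i)⁻¹) = fun _ : Fin n => (1:ℝ) := by
      funext i; exact mul_inv_cancel₀ (hdpos i).ne'
    have h2 : (fun i => (d i)⁻¹ * d i) = fun _ : Fin n => (1:ℝ) := by
      funext i; exact inv_mul_cancel₀ (hdpos i).ne'
    rw [h1, h2, Matrix.diagonal_one]
    simp
  -- determinant relation
  have hdetE : E.det = (∏ i, d i)⁻¹ := by
    simp [hE, Matrix.det_diagonal]
  have hP : (0:ℝ) < ∏ i, A i i := Finset.prod_pos fun i _ => posdef_diag_pos hA i
  have hprodd : (∏ i, d i) * (∏ i, d i) = ∏ i, A i i := by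
    rw [← Finset.prod_mul_distrib]
    exact Finset.prod_congr rfl fun i _ => hdsq i
  have hdetC : C.det = A.det / ∏ i, A i i := by
    rw [hC, Matrix.det_mul, Matrix.det_mul, hdetE]
    have hdne : (∏ i, d i) ≠ 0 := (Finset.prod_pos fun i _ => hdpos i).ne'
    rw [eq_div_iff hP.ne', ← hprodd]
    field_simp
  -- eigenvalues of C
  set lam := hCsd.1.eigenvalues with hlam
  have hlamnn : ∀ i, 0 ≤ lam i := hCsd.eigenvalues_nonneg
  have hsum : ∑ i, lam i = n := by
    have hspec := hCsd.1.spectral_theorem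
    have htr : C.trace = (Matrix.diagonal (RCLike.ofReal ∘ lam) : Matrix (Fin n) (Fin n) ℝ).trace := by
      conv_lhs => rw [hspec]
      rw [Unitary.conjStarAlgAut_apply, Matrix.trace_mul_cycle,
        Matrix.mem_unitaryGroup_iff'.mp (Matrix.IsHermitian.eigenvectorUnitary hCsd.1).2,
        Matrix.one_mul]
    have : C.trace = ∑ i, lam i := by
      rw [htr]; simp [Matrix.trace_diagonal]
    rw [← this]
    simp [Matrix.trace, Matrix.diag, hCdiag]
  have hprodlam : ∏ i, lam i = C.det := by
    have := hCsd.1.det_eq_prod_eigenvalues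
    simpa using this.symm
  have hdetCpos : 0 < C.det := by
    rw [hdetC]; exact div_pos hA.det_pos hP
  have hlampos : ∀ i, 0 < lam i := by
    intro i
    rcases (hlamnn i).lt_or_eq with h | h
    · exact h
    · exfalso
      have : ∏ i, lam i = 0 := Finset.prod_eq_zero (Finset.mem_univ i) h.symm
      rw [hprodlam] at this
      exact hdetCpos.ne' this
  -- some eigenvalue ≠ 1
  have hne1 : ∃ i, lam i ≠ 1 := by
    by_contra h
    push_neg at h
    have hCone : C = 1 := by
      have hspec := hCsd.1.spectral_theorem
      have : (Matrix.diagonal (RCLike.ofReal ∘ lam) : Matrix (Fin n) (Fin n) ℝ) = 1 := by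
        rw [show (RCLike.ofReal ∘ lam : Fin n → ℝ) = fun _ => 1 by funext i; simp [h i]]
        exact Matrix.diagonal_one
      rw [hspec, this, Unitary.conjStarAlgAut_apply, Matrix.mul_one]
      exact Matrix.mem_unitaryGroup_iff.mp (Matrix.IsHermitian.eigenvectorUnitary hCsd.1).2
    apply hnd
    rw [hA_eq, hCone, Matrix.mul_one, Matrix.diagonal_mul_diagonal]
    exact Matrix.isDiag_diagonal _
  obtain ⟨i0, hi0⟩ := hne1
  -- det C < 1 via x + 1 ≤ exp x
  have hCdetlt : C.det < 1 := by
    rw [← hprodlam]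
    have hle : ∀ i ∈ Finset.univ, lam i ≤ Real.exp (lam i - 1) := by
      intro i _
      have := Real.add_one_le_exp (lam i - 1)
      linarith
    have hstep : ∏ i, lam i < ∏ i, Real.exp (lam i - 1) := by
      refine Finset.prod_lt_prod (fun i _ => hlampos i) hle ⟨i0, Finset.mem_univ i0, ?_⟩
      have := Real.add_one_lt_exp (x := lam i0 - 1) (by intro h; apply hi0; linarith)
      linarith
    calc ∏ i, lam i < ∏ i, Real.exp (lam i - 1) := hstep
      _ = Real.exp (∑ i, (lam i - 1)) := (Real.exp_sum _ _).symm
      _ = 1 := by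
          rw [show ∑ i, (lam i - 1) = (∑ i, lam i) - n by rw [Finset.sum_sub_distrib]; simp]
          rw [hsum]; simp
  have : A.det = C.det * ∏ i, A i i := by
    rw [hdetC]; field_simp
  rw [this]
  calc C.det * ∏ i, A i i < 1 * ∏ i, A i i := by
        exact mul_lt_mul_of_pos_right hCdetlt hP
    _ = ∏ i, A i i := one_mul _

-- one direction of the tradeoff
lemma key {n : ℕ} {S Ψ : Matrix (Fin n) (Fin n) ℝ}
    (hS : S.PosDef) (hΨ : Ψ.PosDef)
    (hΨdiag : Ψ.IsDiag) (hSnotdiag : ¬ S.IsDiag)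
    (hdet : Ψ.det = S.det) : ∃ i, Ψ i i < S i i := by
  by_contra h
  push_neg at h
  have h1 : Ψ.det = ∏ i, Ψ i i := by
    conv_lhs => rw [← hΨdiag.diagonal_diag]
    simp [Matrix.det_diagonal, Matrix.diag]
  have h2 : S.det < ∏ i, S i i := hadamard_strict hS hSnotdiag
  have h3 : ∏ i, S i i ≤ ∏ i, Ψ i i :=
    Finset.prod_le_prod (fun i _ => (posdef_diag_pos hS i).le) (fun i _ => h i)
  rw [← hdet, h1] at h2
  exact absurd (h2.trans_le h3) (lt_irrefl _)

theorem generalized_variance_matching_tradeoff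
    (n : ℕ) (S Ψ : Matrix (Fin n) (Fin n) ℝ)
    (hS : S.PosDef) (hΨ : Ψ.PosDef)
    (hΨdiag : Ψ.IsDiag) (hSnotdiag : ¬ S.IsDiag)
    (hdet : Ψ.det = S.det) :
    (∃ i, Ψ i i < S i i) ∧ (∃ j, Ψ⁻¹ j j < S⁻¹ j j) := by
  constructor
  · exact key hS hΨ hΨdiag hSnotdiag hdet
  · refine key hS.inv hΨ.inv ?_ ?_ ?_
    · rw [← hΨdiag.diagonal_diag, Matrix.inv_diagonal]
      exact Matrix.isDiag_diagonal _
    · intro hdiag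
      apply hSnotdiag
      have : S⁻¹⁻¹ = S := Matrix.nonsing_inv_nonsing_inv S hS.det_pos.ne'.isUnit
      rw [← this, ← hdiag.diagonal_diag, Matrix.inv_diagonal]
      exact Matrix.isDiag_diagonal _
    · rw [Matrix.det_nonsing_inv, Matrix.det_nonsing_inv, hdet]
end

section
/- For any n×n real positive definite matrix A and index j such that the j-th row of A has a nonzero off-diagonal entry, A_{jj} · (A⁻¹)_{jj} > 1. -/
theorem diag_mul_inv_diag_gt_one
    (n : ℕ) (A : Matrix (Fin n) (Fin n) ℝ) (hA : A.PosDef) (j : Fin n)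
    (hrow : ∃ k, k ≠ j ∧ A j k ≠ 0) :
    1 < A j j * A⁻¹ j j := by
  obtain ⟨k₀, hk₀ne, hk₀⟩ := hrow
  have hdet : IsUnit A.det := (Matrix.isUnit_iff_isUnit_det A).mp hA.isUnit
  have hAinv : A * A⁻¹ = 1 := Matrix.mul_nonsing_inv A hdet
  have hinvA : A⁻¹ * A = 1 := Matrix.nonsing_inv_mul A hdet
  -- symmetry of A
  have hsymm : ∀ a b, A a b = A b a := by
    intro a b
    have := hA.isHermitian
    rw [Matrix.IsHermitian] at this
    conv_lhs => rw [← this]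
    simp [Matrix.conjTranspose_apply]
  set d := A⁻¹ j j with hd
  have hdpos : 0 < d := by
    have h := hA.inv.dotProduct_mulVec_pos (x := Pi.single j 1) (by
      intro h; have := congrFun h j; simp at this)
    have : dotProduct (star (Pi.single j (1:ℝ))) (A⁻¹.mulVec (Pi.single j 1)) = A⁻¹ j j := by
      simp [Matrix.mulVec_single, dotProduct, Pi.single_apply, Finset.sum_ite_eq']
    rwa [this] at h
  -- define u
  set u : Fin n → ℝ := fun k => A⁻¹ k j - (if k = j then d else 0) with hu
  by_cases hu0 : u = 0
  · -- then A k₀ j = 0, contradiction with A j k₀ ≠ 0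
    exfalso
    have hcol : ∀ k, A⁻¹ k j = if k = j then d else 0 := by
      intro k
      have := congrFun hu0 k
      simp only [hu, Pi.zero_apply, sub_eq_zero] at this
      exact this
    have h1 : (A * A⁻¹) k₀ j = 0 := by
      rw [hAinv]; simp [Matrix.one_apply, hk₀ne]
    rw [Matrix.mul_apply] at h1
    have h2 : ∑ l, A k₀ l * A⁻¹ l j = A k₀ j * d := by
      have he : ∀ l, A k₀ l * A⁻¹ l j = if l = j then A k₀ j * d else 0 := by
        intro l; rw [hcol]
        by_cases hl : l = j <;> simp only [hl, if_true, if_false, mul_zero, mul_ite]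
      rw [Finset.sum_congr rfl (fun l _ => he l), Finset.sum_ite_eq' Finset.univ j, if_pos (Finset.mem_univ j)]
    rw [h2] at h1
    have : A k₀ j = 0 := by
      rcases mul_eq_zero.mp h1 with h | h
      · exact h
      · exact absurd h hdpos.ne'
    exact hk₀ (by rw [hsymm j k₀, this])
  · have hQ := hA.dotProduct_mulVec_pos hu0
    have hstar : star u = u := by simp
    rw [hstar] at hQ
    -- compute dotProduct u (A.mulVec u)
    have hmv : ∀ k, (A.mulVec u) k = (if k = j then 1 else 0) - A k j * d := by
      intro k
      have : (A.mulVec u) k = ∑ l, A k l * u l := by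
        simp [Matrix.mulVec, dotProduct]
      rw [this]
      have : ∑ l, A k l * u l = (∑ l, A k l * A⁻¹ l j) - A k j * d := by
        simp only [hu, mul_sub, Finset.sum_sub_distrib]
        congr 1
        rw [Finset.sum_eq_single j] <;> simp (config := {contextual := true}) [mul_ite]
      rw [this]
      have : ∑ l, A k l * A⁻¹ l j = (A * A⁻¹) k j := (Matrix.mul_apply).symm
      rw [this, hAinv]
      simp [Matrix.one_apply]
    have huj : u j = 0 := by simp [hu, hd]
    have hQval : dotProduct u (A.mulVec u) = d * (A j j * d - 1) := by
      unfold dotProduct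
      have : ∀ k, u k * (A.mulVec u) k = -(A⁻¹ k j * A k j * d) + (if k = j then A⁻¹ j j * A j j * d else 0) := by
        intro k
        by_cases hk : k = j
        · subst hk; rw [huj]; simp
        · rw [hmv k]
          simp [hu, hk]
          ring
      simp_rw [this]
      rw [Finset.sum_add_distrib, Finset.sum_neg_distrib]
      have hsum1 : ∑ k, A⁻¹ k j * A k j * d = d := by
        have : ∑ k, A⁻¹ k j * A k j * d = (∑ k, A j k * A⁻¹ k j) * d := by
          rw [Finset.sum_mul]
          congr 1; ext k; rw [hsymm j k]; ring
        rw [this]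
        have : ∑ k, A j k * A⁻¹ k j = (A * A⁻¹) j j := (Matrix.mul_apply).symm
        rw [this, hAinv]; simp
      rw [hsum1, Finset.sum_ite_eq' Finset.univ j]
      simp [← hd]
      ring
    rw [hQval] at hQ
    have := mul_pos_iff.mp hQ
    rcases this with ⟨_, h⟩ | ⟨h1, _⟩
    · linarith
    · exact absurd h1 (not_lt.mpr hdpos.le)
end

section
/- If Σ and Ψ are n×n positive definite matrices with Ψ diagonal, Σ not diagonal, and Ψ_{ii} = Σ_{ii} for all i, then (Ψ⁻¹)_{ii} ≤ (Σ⁻¹)_{ii} for all i, with strict inequality for at least one i. -/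
open Matrix

lemma posDef_diag_pos (n : ℕ) (S : Matrix (Fin n) (Fin n) ℝ) (hS : S.PosDef) (i : Fin n) :
    0 < S i i := by
  have := (posDef_iff_dotProduct_mulVec.mp hS).2 (x := Pi.single i 1) (by
    intro h
    have := congrFun h i
    simp [Pi.single_apply] at this)
  simpa [single_dotProduct, Matrix.mulVec_single] using this

lemma precision_key (n : ℕ) (S : Matrix (Fin n) (Fin n) ℝ) (hS : S.PosDef) (i : Fin n) :
    (S i i)⁻¹ ≤ S⁻¹ i i ∧ ((∃ j, j ≠ i ∧ S j i ≠ 0) → (S i i)⁻¹ < S⁻¹ i i) := by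
  have hdet : IsUnit S.det := isUnit_iff_ne_zero.mpr hS.det_pos.ne'
  set u : Fin n → ℝ := Pi.single i 1 with hu
  set v : Fin n → ℝ := S⁻¹ *ᵥ u with hv
  set a : ℝ := S i i with haa
  set b : ℝ := S⁻¹ i i with hbb
  have hSv : S *ᵥ v = u := by
    rw [hv, Matrix.mulVec_mulVec, Matrix.mul_nonsing_inv S hdet, Matrix.one_mulVec]
  have ha : 0 < a := posDef_diag_pos n S hS i
  set w : Fin n → ℝ := u - a • v with hw
  have hSw : S *ᵥ w = S *ᵥ u - a • u := by
    rw [hw, Matrix.mulVec_sub, Matrix.mulVec_smul, hSv]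
  have hvSu : v ⬝ᵥ (S *ᵥ u) = 1 := by
    rw [Matrix.dotProduct_mulVec, ← Matrix.mulVec_transpose,
      show Sᵀ = S from hS.1, hSv]
    simp [hu, single_dotProduct]
  have hq : w ⬝ᵥ (S *ᵥ w) = a * a * b - a := by
    rw [hw, hSw, sub_dotProduct, smul_dotProduct,
      dotProduct_sub, dotProduct_sub,
      dotProduct_smul, dotProduct_smul, hvSu]
    have h1 : u ⬝ᵥ (S *ᵥ u) = a := by
      simp [hu, haa, single_dotProduct, Matrix.mulVec_single]
    have h2 : u ⬝ᵥ u = 1 := by simp [hu, single_dotProduct, Pi.single_apply]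
    have h3 : v ⬝ᵥ u = b := by
      simp [hbb, hu, hv, dotProduct_single, Matrix.mulVec_single]
    rw [h1, h2, h3]
    simp only [smul_eq_mul, hbb]
    ring
  constructor
  · have hq0 : 0 ≤ w ⬝ᵥ (S *ᵥ w) := by
      have := hS.posSemidef.dotProduct_mulVec_nonneg w
      simpa using this
    rw [hq] at hq0
    rw [inv_le_iff_one_le_mul₀ ha]
    nlinarith
  · rintro ⟨j, hj, hji⟩
    have hwne : w ≠ 0 := by
      intro h
      have huav : u = a • v := sub_eq_zero.mp (hw ▸ h)
      have h4 : S *ᵥ u = a • u := by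
        rw [show S *ᵥ u = S *ᵥ (a • v) from by rw [← huav], Matrix.mulVec_smul, hSv]
      have := congrFun h4 j
      simp [hu, Matrix.mulVec_single, Pi.single_apply, hj] at this
      exact hji this
    have hq0 : 0 < w ⬝ᵥ (S *ᵥ w) := by
      have := hS.dotProduct_mulVec_pos hwne
      simpa using this
    rw [hq] at hq0
    rw [inv_lt_iff_one_lt_mul₀ ha]
    nlinarith

theorem variance_matching_underestimates_precisions
    (n : ℕ) (S Ψ : Matrix (Fin n) (Fin n) ℝ)
    (hS : S.PosDef) (hΨ : Ψ.PosDef)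
    (hΨdiag : Ψ.IsDiag) (hSnotdiag : ¬ S.IsDiag)
    (hmatch : ∀ i, Ψ i i = S i i) :
    (∀ i, Ψ⁻¹ i i ≤ S⁻¹ i i) ∧ (∃ i, Ψ⁻¹ i i < S⁻¹ i i) := by
  have hΨpos : ∀ i, (0:ℝ) < Ψ i i := posDef_diag_pos n Ψ hΨ
  have hΨeq : Ψ = Matrix.diagonal (fun j => Ψ j j) := by
    ext j k
    by_cases h : j = k
    · subst h; simp
    · simp [Matrix.diagonal, h, hΨdiag h]
  have hΨinveq : Ψ⁻¹ = Matrix.diagonal (fun j => (Ψ j j)⁻¹) := by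
    apply Matrix.inv_eq_right_inv
    conv_lhs => rw [hΨeq]
    rw [Matrix.diagonal_mul_diagonal]
    convert Matrix.diagonal_one with j
    simp [mul_inv_cancel₀ (hΨpos j).ne']
  have hΨinv : ∀ i, Ψ⁻¹ i i = (S i i)⁻¹ := by
    intro i
    rw [hΨinveq]
    simp [hmatch i]
  constructor
  · intro i
    rw [hΨinv i]
    exact (precision_key n S hS i).1
  · have hex : ∃ p : Fin n × Fin n, p.1 ≠ p.2 ∧ S p.1 p.2 ≠ 0 := by
      by_contra h
      push_neg at h
      exact hSnotdiag fun i j hij => h (i, j) hij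
    obtain ⟨⟨j, i⟩, hji, hSji⟩ := hex
    refine ⟨i, ?_⟩
    rw [hΨinv i]
    exact (precision_key n S hS i).2 ⟨j, hji, hSji⟩
end

section
/- If Σ and Ψ are n×n positive definite matrices with Ψ diagonal, Σ not diagonal, and (Ψ⁻¹)_{ii} = (Σ⁻¹)_{ii} for all i, then Ψ_{ii} ≤ Σ_{ii} for all i, with strict inequality for at least one i. -/
open Matrix

private lemma diag_pos_of_posDef' {n : ℕ} {M : Matrix (Fin n) (Fin n) ℝ} (hM : M.PosDef)
    (i : Fin n) : 0 < M i i := by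
  have h := hM.dotProduct_mulVec_pos (x := Pi.single i 1) (by
    intro h
    have := congrFun h i
    simp at this)
  simpa [Matrix.mulVec_single, _root_.single_dotProduct] using h

private lemma key_ineq {n : ℕ} {S : Matrix (Fin n) (Fin n) ℝ} (hS : S.PosDef) (i : Fin n) :
    (S⁻¹ i i)⁻¹ ≤ S i i ∧ ((S⁻¹ i i)⁻¹ = S i i → ∀ j, j ≠ i → S⁻¹ j i = 0) := by
  have ha : 0 < S⁻¹ i i := diag_pos_of_posDef' hS.inv i
  set a : ℝ := S⁻¹ i i with ha_def
  have ha0 : a ≠ 0 := ne_of_gt ha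
  set e : Fin n → ℝ := Pi.single i 1 with he
  set y : Fin n → ℝ := S⁻¹ *ᵥ e with hy
  set z : Fin n → ℝ := e - a⁻¹ • y with hz
  have hdet : IsUnit S.det := (Matrix.isUnit_iff_isUnit_det S).mp hS.isUnit
  have hSy : S *ᵥ y = e := by
    rw [hy, Matrix.mulVec_mulVec, Matrix.mul_nonsing_inv _ hdet, Matrix.one_mulVec]
  have hsym : Sᵀ = S := by
    ext j k
    have := congrFun (congrFun hS.1 j) k
    simpa using this
  have hee : e ⬝ᵥ e = 1 := by simp [he, _root_.single_dotProduct]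
  have heSe : e ⬝ᵥ (S *ᵥ e) = S i i := by
    simp [he, Matrix.mulVec_single, _root_.single_dotProduct]
  have hye : y ⬝ᵥ e = a := by
    simp [hy, he, _root_.dotProduct_single, Matrix.mulVec_single, ha_def]
  have hySe : y ⬝ᵥ (S *ᵥ e) = 1 := by
    rw [Matrix.dotProduct_mulVec]
    conv_lhs => rw [← hsym, Matrix.vecMul_transpose, hSy]
    exact hee
  have hq : z ⬝ᵥ (S *ᵥ z) = S i i - a⁻¹ := by
    rw [hz, Matrix.mulVec_sub, Matrix.mulVec_smul, hSy]
    rw [_root_.sub_dotProduct, _root_.smul_dotProduct,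
      _root_.dotProduct_sub, _root_.dotProduct_sub,
      _root_.dotProduct_smul, _root_.dotProduct_smul,
      heSe, hee, hySe, hye]
    simp only [smul_eq_mul]
    field_simp
    ring
  have hnn : 0 ≤ z ⬝ᵥ (S *ᵥ z) := by
    have := hS.posSemidef.dotProduct_mulVec_nonneg z
    simpa using this
  constructor
  · linarith [hq ▸ hnn]
  · intro heq j hj
    have hq0 : z ⬝ᵥ (S *ᵥ z) = 0 := by rw [hq, heq]; ring
    have hz0 : z = 0 := by
      by_contra hne
      have := hS.dotProduct_mulVec_pos hne
      simp only [star_trivial] at this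
      linarith [hq0 ▸ this]
    have hzj := congrFun hz0 j
    have hyj : y j = S⁻¹ j i := by simp [hy, he, Matrix.mulVec_single]
    simp only [hz, Pi.sub_apply, Pi.smul_apply, smul_eq_mul, Pi.zero_apply, he,
      Pi.single_eq_of_ne hj] at hzj
    have : a⁻¹ * y j = 0 := by linarith
    rw [← hyj]
    rcases mul_eq_zero.mp this with h | h
    · exact absurd h (inv_ne_zero ha0)
    · exact h

theorem precision_matching_underestimates_variances
    (n : ℕ) (S Ψ : Matrix (Fin n) (Fin n) ℝ)
    (hS : S.PosDef) (hΨ : Ψ.PosDef)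
    (hΨdiag : Ψ.IsDiag) (hSnotdiag : ¬ S.IsDiag)
    (hmatch : ∀ i, Ψ⁻¹ i i = S⁻¹ i i) :
    (∀ i, Ψ i i ≤ S i i) ∧ (∃ i, Ψ i i < S i i) := by
  have hΨpos : ∀ i, 0 < Ψ i i := fun i => diag_pos_of_posDef' hΨ i
  have hΨinveq : Ψ⁻¹ = Matrix.diagonal (fun i => (Ψ i i)⁻¹) := by
    apply Matrix.inv_eq_right_inv
    ext j k
    rw [Matrix.mul_diagonal]
    rcases eq_or_ne j k with rfl | h
    · simp [mul_inv_cancel₀ (hΨpos j).ne']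
    · simp [hΨdiag h, Matrix.one_apply_ne h]
  have hΨinv : ∀ i, Ψ⁻¹ i i = (Ψ i i)⁻¹ := by
    intro i; rw [hΨinveq]; simp
  have hΨval : ∀ i, Ψ i i = (S⁻¹ i i)⁻¹ := by
    intro i
    have := (hΨinv i).symm.trans (hmatch i)
    rw [← this, inv_inv]
  have hle : ∀ i, Ψ i i ≤ S i i := fun i => (hΨval i) ▸ (key_ineq hS i).1
  refine ⟨hle, ?_⟩
  by_contra hcon
  push_neg at hcon
  have heq : ∀ i, (S⁻¹ i i)⁻¹ = S i i := fun i =>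
    (hΨval i) ▸ le_antisymm ((hΨval i) ▸ (key_ineq hS i).1) (hcon i)
  have hdiaginv : S⁻¹.IsDiag := fun j i hji => (key_ineq hS i).2 (heq i) j hji
  apply hSnotdiag
  have hdet : IsUnit S.det := (Matrix.isUnit_iff_isUnit_det S).mp hS.isUnit
  have hSS : S = (S⁻¹)⁻¹ := (Matrix.nonsing_inv_nonsing_inv S hdet).symm
  rw [hSS, ← hdiaginv.diagonal_diag, Matrix.inv_diagonal]
  exact Matrix.isDiag_diagonal _
end

section
/- Let Σ, Ψ be n×n positive definite matrices with Ψ diagonal, Σ not diagonal. Then log det(Σ) − log det(Ψ) > ∑_i log((Ψ⁻¹)_{ii}/(Σ⁻¹)_{ii}). -/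
open Matrix Finset

namespace HadamardAux

variable {m l : Type*} [Fintype m] [DecidableEq m] [Fintype l] [DecidableEq l]

lemma diag_pos {k : Type*} [Fintype k] [DecidableEq k] {M : Matrix k k ℝ}
    (hM : M.PosDef) (i : k) : 0 < M i i := by
  have h := hM.dotProduct_mulVec_pos (x := Pi.single i 1) (by
    intro hx
    have := congr_fun hx i
    simp [Pi.single_eq_same] at this)
  simpa [dotProduct, mulVec, Pi.single_apply, Finset.mul_sum] using h

lemma posDef_submatrix_equiv {k : Type*} [Fintype k] [DecidableEq k] {M : Matrix k k ℝ}
    (hM : M.PosDef) (e : m ≃ k) : (M.submatrix e e).PosDef := by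
  refine Matrix.PosDef.of_dotProduct_mulVec_pos (hM.1.submatrix e) fun x hx => ?_
  have hy : (x ∘ e.symm) ≠ 0 := by
    intro hy
    apply hx
    funext i
    have := congr_fun hy (e i)
    simpa using this
  have key : star x ⬝ᵥ (M.submatrix e e) *ᵥ x
      = star (x ∘ e.symm) ⬝ᵥ M *ᵥ (x ∘ e.symm) := by
    rw [submatrix_mulVec_equiv]
    simp only [dotProduct, Function.comp_apply, star_trivial]
    exact Fintype.sum_equiv e _ _ (fun i => by simp)
  rw [key]
  exact hM.dotProduct_mulVec_pos hy

lemma schur_posDef {A : Matrix m m ℝ} (B : Matrix m l ℝ) (D : Matrix l l ℝ)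
    (hA : A.PosDef) [Invertible A]
    (h : (fromBlocks A B Bᴴ D).PosDef) : (D - Bᴴ * A⁻¹ * B).PosDef := by
  refine Matrix.PosDef.of_dotProduct_mulVec_pos ((Matrix.IsHermitian.fromBlocks₁₁ B D hA.1).mp h.1) fun x hx => ?_
  have h2 := h.dotProduct_mulVec_pos (x := (-((A⁻¹ * B) *ᵥ x)) ⊕ᵥ x) (by
    intro hc
    apply hx
    funext i
    exact congr_fun hc (Sum.inr i))
  rw [dotProduct_mulVec, schur_complement_eq₁₁ B D _ _ hA.1, neg_add_cancel] at h2
  simp only [star_zero, zero_vecMul, zero_dotProduct, zero_add] at h2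
  rw [dotProduct_mulVec]
  exact h2

/-- The equivalence splitting `Fin (n+1)` as `Fin 1 ⊕ Fin n`. -/
def finOneSum (n : ℕ) : Fin 1 ⊕ Fin n ≃ Fin (n + 1) where
  toFun := Sum.elim (fun _ => 0) Fin.succ
  invFun := Fin.cases (Sum.inl 0) Sum.inr
  left_inv := by
    rintro (i | i)
    · simp [Subsingleton.elim i 0]
    · simp
  right_inv := by
    intro i
    induction i using Fin.cases <;> simp

/-- Strict Hadamard inequality for positive definite real matrices. -/
theorem hadamard : ∀ (n : ℕ) (A : Matrix (Fin n) (Fin n) ℝ), A.PosDef →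
    A.det ≤ ∏ i, A i i ∧ (¬ A.IsDiag → A.det < ∏ i, A i i) := by
  intro n
  induction n with
  | zero =>
    intro A hA
    refine ⟨by simp [Matrix.det_fin_zero], fun h => absurd (fun i j _ => Fin.elim0 i) h⟩
  | succ n ih =>
    intro A hA
    set e := finOneSum n with he
    have hB : (A.submatrix e e).PosDef := posDef_submatrix_equiv hA e
    set B := A.submatrix e e with hBdef
    set A₁ := B.toBlocks₁₁ with hA₁def
    set B₁₂ := B.toBlocks₁₂ with hB₁₂def
    set D := B.toBlocks₂₂ with hDdef
    have hB21 : B.toBlocks₂₁ = B₁₂ᴴ := by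
      ext i j
      exact (hB.1.apply (Sum.inr i) (Sum.inl j)).symm
    have hBblocks : B = fromBlocks A₁ B₁₂ B₁₂ᴴ D := by
      rw [← hB21, fromBlocks_toBlocks]
    -- positive definiteness of the blocks
    have hA₁ : A₁.PosDef := by
      refine Matrix.PosDef.of_dotProduct_mulVec_pos (hB.1.submatrix Sum.inl) fun x hx => ?_
      have h2 := hB.dotProduct_mulVec_pos (x := x ⊕ᵥ 0) (by
        intro hc; apply hx; funext i; exact congr_fun hc (Sum.inl i))
      rw [hBblocks] at h2
      simpa [dotProduct, fromBlocks_mulVec, Fintype.sum_sum_type, mulVec] using h2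
    have hD : D.PosDef := by
      refine Matrix.PosDef.of_dotProduct_mulVec_pos (hB.1.submatrix Sum.inr) fun x hx => ?_
      have h2 := hB.dotProduct_mulVec_pos (x := (0 : Fin 1 → ℝ) ⊕ᵥ x) (by
        intro hc; apply hx; funext i; exact congr_fun hc (Sum.inr i))
      rw [hBblocks] at h2
      simpa [dotProduct, fromBlocks_mulVec, Fintype.sum_sum_type, mulVec] using h2
    haveI : Invertible A₁ :=
      A₁.invertibleOfIsUnitDet (isUnit_iff_ne_zero.mpr hA₁.det_pos.ne')
    set Sc := D - B₁₂ᴴ * A₁⁻¹ * B₁₂ with hScdef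
    have hSc : Sc.PosDef := schur_posDef B₁₂ D hA₁ (hBblocks ▸ hB)
    have ha0 : 0 < A 0 0 := diag_pos hA 0
    have hA₁det : A₁.det = A 0 0 := by
      rw [Matrix.det_fin_one]; rfl
    have hdet : A.det = A 0 0 * Sc.det := by
      rw [← Matrix.det_submatrix_equiv_self e A, ← hBdef, hBblocks,
        Matrix.det_fromBlocks₁₁, hA₁det, Matrix.invOf_eq_nonsing_inv]
    have hA₁inv : A₁⁻¹ 0 0 = (A 0 0)⁻¹ := by
      rw [Matrix.inv_def, Matrix.adjugate_fin_one, Matrix.det_fin_one]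
      have : A₁ 0 0 = A 0 0 := rfl
      simp [this, Ring.inverse_eq_inv']
    have hcorr : ∀ k, (B₁₂ᴴ * A₁⁻¹ * B₁₂) k k = (A 0 0)⁻¹ * (B₁₂ 0 k)^2 := by
      intro k
      have e1 : A₁ 0 0 = A 0 0 := rfl
      simp [Matrix.mul_apply, Fin.sum_univ_one, hA₁inv, e1]
      ring
    have hSck : ∀ k, Sc k k = D k k - (A 0 0)⁻¹ * (B₁₂ 0 k)^2 := by
      intro k
      rw [hScdef, Matrix.sub_apply, hcorr]
    have hSle : ∀ k, Sc k k ≤ D k k := by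
      intro k
      rw [hSck]
      have : 0 ≤ (A 0 0)⁻¹ * (B₁₂ 0 k)^2 :=
        mul_nonneg (inv_nonneg.mpr ha0.le) (sq_nonneg _)
      linarith
    have hSpos : ∀ k, 0 < Sc k k := fun k => diag_pos hSc k
    have hprodA : ∏ i, A i i = A 0 0 * ∏ k, D k k := by
      rw [Fin.prod_univ_succ]
      rfl
    have hprodle : ∏ k, Sc k k ≤ ∏ k, D k k :=
      Finset.prod_le_prod (fun k _ => (hSpos k).le) (fun k _ => hSle k)
    have hle1 : Sc.det ≤ ∏ k, Sc k k := (ih Sc hSc).1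
    constructor
    · rw [hdet, hprodA]
      exact mul_le_mul_of_nonneg_left (le_trans hle1 hprodle) ha0.le
    · intro hnd
      have hAB12 : ∀ k : Fin n, B₁₂ 0 k = A 0 (Fin.succ k) := fun k => rfl
      obtain ⟨i, j, hij, hAij⟩ : ∃ i j, i ≠ j ∧ A i j ≠ 0 := by
        by_contra hc
        push_neg at hc
        exact hnd (fun i j h => hc i j h)
      by_cases hv : ∀ k : Fin n, A 0 (Fin.succ k) = 0
      · -- off-diagonal entry lies in the lower-right block
        have hB12 : B₁₂ = 0 := by
          ext p k
          have hp : p = 0 := Subsingleton.elim _ _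
          rw [hp]
          exact (hAB12 k).trans (hv k)
        have hSD : Sc = D := by
          rw [hScdef, hB12]
          simp
        have hsym : ∀ i j, A i j = A j i := by
          intro i j
          have := hA.1.apply i j
          simpa using this.symm
        have hi0 : i ≠ 0 := by
          rintro rfl
          obtain ⟨j', rfl⟩ := Fin.exists_succ_eq_of_ne_zero (Ne.symm hij)
          exact hAij (hv j')
        have hj0 : j ≠ 0 := by
          rintro rfl
          obtain ⟨i', rfl⟩ := Fin.exists_succ_eq_of_ne_zero hi0
          exact hAij ((hsym i'.succ 0).trans (hv i'))
        obtain ⟨i', rfl⟩ := Fin.exists_succ_eq_of_ne_zero hi0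
        obtain ⟨j', rfl⟩ := Fin.exists_succ_eq_of_ne_zero hj0
        have hDnd : ¬ D.IsDiag := by
          intro hDd
          exact hAij (hDd (show i' ≠ j' by
            intro h; exact hij (by rw [h])))
        have hlt := (ih D hD).2 hDnd
        rw [hdet, hSD, hprodA]
        exact mul_lt_mul_of_pos_left hlt ha0
      · push_neg at hv
        obtain ⟨k, hk⟩ := hv
        have hklt : Sc k k < D k k := by
          rw [hSck, hAB12]
          have h2 : 0 < (A 0 (Fin.succ k))^2 :=
            lt_of_le_of_ne (sq_nonneg _) (Ne.symm (pow_ne_zero 2 hk))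
          have : 0 < (A 0 0)⁻¹ * (A 0 (Fin.succ k))^2 :=
            mul_pos (inv_pos.mpr ha0) h2
          linarith
        have hprodlt : ∏ k, Sc k k < ∏ k, D k k :=
          Finset.prod_lt_prod (fun k _ => hSpos k) (fun k _ => hSle k) ⟨k, Finset.mem_univ k, hklt⟩
        rw [hdet, hprodA]
        exact mul_lt_mul_of_pos_left (lt_of_le_of_lt hle1 hprodlt) ha0

end HadamardAux

theorem logdet_gap_gt_sum_log_precision_ratios
    (n : ℕ) (S Ψ : Matrix (Fin n) (Fin n) ℝ)
    (hS : S.PosDef) (hΨ : Ψ.PosDef)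
    (hΨdiag : Ψ.IsDiag) (hSnotdiag : ¬ S.IsDiag) :
    ∑ i, Real.log (Ψ⁻¹ i i / S⁻¹ i i) < Real.log S.det - Real.log Ψ.det := by
  have hSinv : S⁻¹.PosDef := hS.inv
  have hSinvnd : ¬ S⁻¹.IsDiag := by
    intro h
    apply hSnotdiag
    have hS' : S = S⁻¹⁻¹ := (Matrix.nonsing_inv_nonsing_inv S
      (isUnit_iff_ne_zero.mpr hS.det_pos.ne')).symm
    rw [hS', ← h.diagonal_diag, Matrix.inv_diagonal]
    exact Matrix.isDiag_diagonal _
  have hHad := (HadamardAux.hadamard n S⁻¹ hSinv).2 hSinvnd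
  have hSinvdiag : ∀ i, 0 < S⁻¹ i i := fun i => HadamardAux.diag_pos hSinv i
  have hΨii : ∀ i, 0 < Ψ i i := fun i => HadamardAux.diag_pos hΨ i
  have hΨinvmat : Ψ⁻¹ = Matrix.diagonal (fun i => (Ψ i i)⁻¹) := by
    apply Matrix.inv_eq_right_inv
    nth_rewrite 1 [← hΨdiag.diagonal_diag]
    rw [Matrix.diagonal_mul_diagonal,
      show (fun i => Ψ.diag i * (Ψ i i)⁻¹) = fun _ => (1 : ℝ) from
        funext fun i => mul_inv_cancel₀ (hΨii i).ne', Matrix.diagonal_one]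
  have hΨinv : ∀ i, Ψ⁻¹ i i = (Ψ i i)⁻¹ := by
    intro i
    rw [hΨinvmat]
    simp
  have hΨdet : Ψ.det = ∏ i, Ψ i i := by
    conv_lhs => rw [← hΨdiag.diagonal_diag]
    rw [Matrix.det_diagonal]
    rfl
  have hlogΨ : Real.log Ψ.det = ∑ i, Real.log (Ψ i i) := by
    rw [hΨdet, Real.log_prod]
    exact fun i _ => (hΨii i).ne'
  have hsplit : ∑ i, Real.log (Ψ⁻¹ i i / S⁻¹ i i)
      = -Real.log Ψ.det - ∑ i, Real.log (S⁻¹ i i) := by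
    rw [hlogΨ, ← Finset.sum_neg_distrib, ← Finset.sum_sub_distrib]
    apply Finset.sum_congr rfl
    intro i _
    rw [hΨinv i, Real.log_div (inv_ne_zero (hΨii i).ne') (hSinvdiag i).ne', Real.log_inv]
  have hkey : -Real.log S.det < ∑ i, Real.log (S⁻¹ i i) := by
    have h1 : Real.log (S⁻¹.det) < Real.log (∏ i, S⁻¹ i i) :=
      Real.log_lt_log hSinv.det_pos hHad
    rw [Real.log_prod (fun i _ => (hSinvdiag i).ne')] at h1
    rw [Matrix.det_nonsing_inv, Ring.inverse_eq_inv', Real.log_inv] at h1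
    exact h1
  rw [hsplit]
  linarith
end

section
/- Fix α ∈ (0,1) and an n×n positive definite matrix Σ. If a diagonal positive definite matrix Ψ minimizes F(Ψ) = log det(αΨ + (1−α)Σ) − α log det(Ψ) over diagonal positive definite matrices, then (Ψ⁻¹)_{ii} = ((αΨ + (1−α)Σ)⁻¹)_{ii} for all i. -/
open Matrix

private lemma posDef_smul_real {n : ℕ} {S : Matrix (Fin n) (Fin n) ℝ} (hS : S.PosDef)
    {c : ℝ} (hc : 0 < c) : (c • S).PosDef := by
  refine Matrix.PosDef.of_dotProduct_mulVec_pos ?_ (fun x hx => ?_)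
  · unfold Matrix.IsHermitian
    rw [conjTranspose_smul, hS.1.eq]
    simp
  · have := hS.dotProduct_mulVec_pos hx
    rw [smul_mulVec, dotProduct_smul, smul_eq_mul]
    exact mul_pos hc this

private lemma updateRow_updateRow' {n : ℕ} (M : Matrix (Fin n) (Fin n) ℝ) (i : Fin n)
    (v w : Fin n → ℝ) : (M.updateRow i v).updateRow i w = M.updateRow i w := by
  ext j k
  by_cases h : j = i <;> simp [Matrix.updateRow_apply, h]

theorem renyi_fixed_point_equation
    (n : ℕ) (α : ℝ) (hα : α ∈ Set.Ioo (0 : ℝ) 1)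
    (S : Matrix (Fin n) (Fin n) ℝ) (hS : S.PosDef)
    (d : Fin n → ℝ) (hd : ∀ i, 0 < d i)
    (hmin : ∀ d' : Fin n → ℝ, (∀ i, 0 < d' i) →
      Real.log (α • Matrix.diagonal d + (1 - α) • S).det
        - α * Real.log (Matrix.diagonal d).det ≤
      Real.log (α • Matrix.diagonal d' + (1 - α) • S).det
        - α * Real.log (Matrix.diagonal d').det) :
    ∀ i, (Matrix.diagonal d)⁻¹ i i
      = (α • Matrix.diagonal d + (1 - α) • S)⁻¹ i i := by
  obtain ⟨hα0, hα1⟩ := hα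
  intro i
  set A : ℝ → Matrix (Fin n) (Fin n) ℝ :=
    fun t => α • Matrix.diagonal (Function.update d i t) + (1 - α) • S with hA
  have hupd : ∀ t > (0:ℝ), ∀ j, 0 < Function.update d i t j := by
    intro t ht j
    rcases eq_or_ne j i with h | h
    · rw [h, Function.update_self]; exact ht
    · simp [Function.update_apply, h, hd j]
  have hApos : ∀ t > (0:ℝ), (A t).PosDef := by
    intro t ht
    exact (posDef_smul_real (Matrix.posDef_diagonal_iff.mpr (hupd t ht)) hα0).add
      (posDef_smul_real hS (by linarith))
  -- rank-one structure in t
  have hrow : ∀ t, A t = (A 0).updateRow i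
      ((A 0) i + (α * t) • (Pi.single i 1 : Fin n → ℝ)) := by
    intro t
    ext j k
    by_cases hj : j = i
    · subst hj
      simp only [hA, Matrix.updateRow_self, Matrix.add_apply, Matrix.smul_apply,
        Matrix.diagonal_apply, Pi.add_apply, Pi.smul_apply,
        Pi.single_apply, smul_eq_mul]
      by_cases hk : j = k
      · subst hk
        simp only [if_true, Function.update_self]
        ring
      · simp only [if_neg hk, Pi.add_apply, Pi.smul_apply, Pi.single_apply, smul_eq_mul,
          if_neg (fun h : k = j => hk h.symm)]
        ring
    · simp only [hA, Matrix.updateRow_ne hj, Matrix.add_apply, Matrix.smul_apply,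
        Matrix.diagonal_apply, smul_eq_mul]
      congr 2
      simp [Function.update_apply, hj]
  set a : ℝ := (A 0).det with ha
  set b : ℝ := α * Matrix.adjugate (A 0) i i with hb
  have hdet : ∀ t, (A t).det = a + b * t := by
    intro t
    rw [hrow t, Matrix.det_updateRow_add, Matrix.det_updateRow_smul,
      Matrix.updateRow_eq_self, ← Matrix.adjugate_apply]
    ring
  set t₀ := d i with ht₀def
  have ht₀ : 0 < t₀ := hd i
  have hadj : Matrix.adjugate (A t₀) i i = Matrix.adjugate (A 0) i i := by
    rw [Matrix.adjugate_apply, Matrix.adjugate_apply, hrow t₀, updateRow_updateRow']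
  set p : ℝ := ∏ j ∈ Finset.univ \ {i}, d j with hp
  have hppos : 0 < p := Finset.prod_pos (fun j _ => hd j)
  set f : ℝ → ℝ := fun t => Real.log (A t).det
    - α * Real.log (Matrix.diagonal (Function.update d i t)).det with hf
  set g : ℝ → ℝ := fun t => Real.log (a + b * t)
    - α * (Real.log t + Real.log p) with hg
  have hmem : Set.Ioi (0:ℝ) ∈ nhds t₀ := isOpen_Ioi.mem_nhds ht₀
  have hfg : ∀ t ∈ Set.Ioi (0:ℝ), f t = g t := by
    intro t ht
    simp only [hf, hg, hdet t]
    congr 2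
    rw [Matrix.det_diagonal, Finset.prod_update_of_mem (Finset.mem_univ i),
      Real.log_mul (ne_of_gt ht) (ne_of_gt hppos)]
  have hAt₀ : A t₀ = α • Matrix.diagonal d + (1 - α) • S := by
    rw [hA]; simp [ht₀def, Function.update_eq_self]
  have hmin' : IsLocalMin f t₀ := by
    filter_upwards [hmem] with t ht
    have := hmin (Function.update d i t) (hupd t ht)
    simp only [hf]
    rw [show Function.update d i t₀ = d from Function.update_eq_self i d, hAt₀]
    exact this
  have hming : IsLocalMin g t₀ := by
    refine hmin'.congr ?_
    filter_upwards [hmem] with t ht using hfg t ht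
  have hapos : 0 < a + b * t₀ := by
    rw [← hdet t₀]; exact (hApos t₀ ht₀).det_pos
  have h1 : HasDerivAt (fun t : ℝ => a + b * t) b t₀ := by
    simpa using ((hasDerivAt_id t₀).const_mul b).const_add a
  have h2 : HasDerivAt (fun t : ℝ => Real.log (a + b * t)) (b / (a + b * t₀)) t₀ :=
    h1.log (ne_of_gt hapos)
  have h3 : HasDerivAt (fun t : ℝ => Real.log t + Real.log p) t₀⁻¹ t₀ :=
    (Real.hasDerivAt_log (ne_of_gt ht₀)).add_const (Real.log p)
  have hgd : HasDerivAt g (b / (a + b * t₀) - α * t₀⁻¹) t₀ := by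
    simpa [hg, mul_comm, Pi.sub_def] using h2.sub (h3.const_mul α)
  have hzero : b / (a + b * t₀) - α * t₀⁻¹ = 0 := hming.hasDerivAt_eq_zero hgd
  have key : b / (a + b * t₀) = α * t₀⁻¹ := by linarith
  -- compute both sides
  have hdiaginv : (Matrix.diagonal d)⁻¹ = Matrix.diagonal (fun j => (d j)⁻¹) := by
    refine Matrix.inv_eq_left_inv ?_
    rw [Matrix.diagonal_mul_diagonal]
    convert Matrix.diagonal_one using 2
    ext j
    exact inv_mul_cancel₀ (hd j).ne'
  have hdet₀ : (α • Matrix.diagonal d + (1 - α) • S).det = a + b * t₀ := by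
    rw [← hAt₀, hdet t₀]
  have hRHS : (α • Matrix.diagonal d + (1 - α) • S)⁻¹ i i
      = (a + b * t₀)⁻¹ * (Matrix.adjugate (A 0) i i) := by
    rw [Matrix.inv_def, hdet₀, Matrix.smul_apply, ← hAt₀, hadj, Ring.inverse_eq_inv',
      smul_eq_mul]
  rw [hRHS, hdiaginv, Matrix.diagonal_apply_eq, ← ht₀def]
  field_simp [ne_of_gt ht₀, ne_of_gt hapos] at key
  rw [hb] at key hapos ⊢
  have key2 : (A 0).adjugate i i * t₀ = a + α * (A 0).adjugate i i * t₀ :=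
    mul_left_cancel₀ (ne_of_gt hα0) (by linear_combination key)
  rw [← key2] at hapos
  have hadjne : (A 0).adjugate i i ≠ 0 := by
    intro h
    rw [h, zero_mul] at hapos
    exact lt_irrefl 0 hapos
  rw [← key2, mul_comm ((A 0).adjugate i i) t₀, mul_inv, mul_assoc,
    inv_mul_cancel₀ hadjne, mul_one]
end

section
/- Fix α ∈ (0,1) and an n×n positive definite matrix Σ. The function F(Ψ) = log det(αΨ + (1−α)Σ) − α log det(Ψ), defined on diagonal positive definite matrices Ψ, tends to +∞ whenever some diagonal entry Ψ_{ii} tends to 0 or to +∞; hence F attains its minimum at some diagonal positive definite Ψ. -/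
open Filter

open Matrix in
lemma conj_unitary_psd {n : ℕ} {A : Matrix (Fin n) (Fin n) ℝ} (hA : A.IsHermitian)
    (c : ℝ) (hc : ∀ i, c ≤ hA.eigenvalues i) : (A - c • 1).PosSemidef := by
  have hU : (hA.eigenvectorUnitary : Matrix (Fin n) (Fin n) ℝ) *
      (star hA.eigenvectorUnitary : Matrix (Fin n) (Fin n) ℝ) = 1 :=
    (Matrix.mem_unitaryGroup_iff).mp hA.eigenvectorUnitary.2
  have key : A - c • 1 = (hA.eigenvectorUnitary : Matrix (Fin n) (Fin n) ℝ) *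
      diagonal (fun i => hA.eigenvalues i - c) *
      (star hA.eigenvectorUnitary : Matrix (Fin n) (Fin n) ℝ) := by
    conv_lhs => rw [hA.spectral_theorem, Unitary.conjStarAlgAut_apply]
    have h1 : (c • 1 : Matrix (Fin n) (Fin n) ℝ) =
        (hA.eigenvectorUnitary : Matrix (Fin n) (Fin n) ℝ) * (c • 1) *
        (star hA.eigenvectorUnitary : Matrix (Fin n) (Fin n) ℝ) := by
      rw [Matrix.mul_smul, mul_one, Matrix.smul_mul, hU]
    rw [h1, ← Matrix.sub_mul, ← Matrix.mul_sub]
    congr 1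
    congr 1
    ext i j
    by_cases h : i = j <;>
      simp [Matrix.diagonal, Matrix.one_apply, h, RCLike.ofReal]
  rw [key, Matrix.star_eq_conjTranspose]
  exact Matrix.PosSemidef.mul_mul_conjTranspose_same
    (Matrix.posSemidef_diagonal_iff.mpr fun i => sub_nonneg.mpr (hc i)) _

open Matrix in
lemma one_le_det_one_add {n : ℕ} {C : Matrix (Fin n) (Fin n) ℝ} (hC : C.PosSemidef) :
    1 ≤ (1 + C).det := by
  set U := (hC.1.eigenvectorUnitary : Matrix (Fin n) (Fin n) ℝ) with hUdef
  have hU : U * star U = 1 := (Matrix.mem_unitaryGroup_iff).mp hC.1.eigenvectorUnitary.2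
  have hdiag : (diagonal fun i => 1 + hC.1.eigenvalues i) =
      1 + diagonal (RCLike.ofReal ∘ hC.1.eigenvalues) := by
    ext i j
    by_cases h : i = j <;> simp [Matrix.diagonal, Matrix.one_apply, h, RCLike.ofReal]
  have key : 1 + C = U * (diagonal fun i => 1 + hC.1.eigenvalues i) * star U := by
    rw [hdiag, Matrix.mul_add, mul_one, Matrix.add_mul, hU]
    conv_lhs => rw [hC.1.spectral_theorem, Unitary.conjStarAlgAut_apply]
  have h1 : U.det * (star U).det = 1 := by rw [← Matrix.det_mul, hU, Matrix.det_one]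
  have h2 : (1:ℝ) ≤ (diagonal fun i => 1 + hC.1.eigenvalues i).det := by
    rw [Matrix.det_diagonal]
    calc (1:ℝ) = ∏ _i : Fin n, 1 := by simp
      _ ≤ ∏ i, (1 + hC.1.eigenvalues i) := by
        refine Finset.prod_le_prod (fun i _ => zero_le_one) fun i _ => ?_
        have := hC.eigenvalues_nonneg i
        linarith
  rw [key, Matrix.det_mul, Matrix.det_mul]
  have h3 : U.det * (diagonal fun i => 1 + hC.1.eigenvalues i).det * (star U).det =
      (diagonal fun i => 1 + hC.1.eigenvalues i).det := by
    linear_combination (diagonal fun i => 1 + hC.1.eigenvalues i).det * h1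
  rw [h3]; exact h2

open Matrix MatrixOrder in
lemma det_le_det_add {n : ℕ} {A B : Matrix (Fin n) (Fin n) ℝ} (hA : A.PosDef)
    (hB : B.PosSemidef) : A.det ≤ (A + B).det := by
  classical
  set R := CFC.sqrt A with hRdef
  have hRR : R * R = A := CFC.sqrt_mul_sqrt_self A hA.posSemidef.nonneg
  have hRH : R.IsHermitian := (CFC.sqrt_nonneg A).posSemidef.1
  have hRnn : 0 ≤ R.det := by
    rw [hRH.det_eq_prod_eigenvalues]
    exact Finset.prod_nonneg fun i _ =>
      (CFC.sqrt_nonneg A).posSemidef.eigenvalues_nonneg i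
  have hdetR : 0 < R.det := by
    have h2 : R.det * R.det = A.det := by rw [← Matrix.det_mul, hRR]
    nlinarith [hA.det_pos]
  have hunit : IsUnit R.det := isUnit_iff_ne_zero.mpr hdetR.ne'
  have hC : (R⁻¹ * B * R⁻¹).PosSemidef := by
    have h : R⁻¹ * B * R⁻¹ = R⁻¹ * B * (R⁻¹)ᴴ := by
      rw [Matrix.conjTranspose_nonsing_inv, hRH.eq]
    rw [h]
    exact hB.mul_mul_conjTranspose_same _
  have key : A + B = R * (1 + R⁻¹ * B * R⁻¹) * R := by
    rw [Matrix.mul_add, mul_one, Matrix.add_mul, hRR]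
    congr 1
    rw [Matrix.mul_assoc, Matrix.mul_assoc, Matrix.nonsing_inv_mul _ hunit, mul_one,
      ← Matrix.mul_assoc, Matrix.mul_nonsing_inv _ hunit, one_mul]
  calc A.det = A.det * 1 := (mul_one _).symm
    _ ≤ A.det * (1 + R⁻¹ * B * R⁻¹).det :=
      mul_le_mul_of_nonneg_left (one_le_det_one_add hC) hA.det_pos.le
    _ = (A + B).det := by
      rw [key, Matrix.det_mul, Matrix.det_mul, ← hRR, Matrix.det_mul]; ring

lemma psd_smul' {n : ℕ} {M : Matrix (Fin n) (Fin n) ℝ} (hM : M.PosSemidef) {r : ℝ}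
    (hr : 0 ≤ r) : (r • M).PosSemidef := by
  constructor
  · rw [Matrix.IsHermitian, Matrix.conjTranspose_smul, star_trivial, hM.1.eq]
  · intro x
    exact (hM.smul hr).2 x

lemma posdef_smul' {n : ℕ} {M : Matrix (Fin n) (Fin n) ℝ} (hM : M.PosDef) {r : ℝ}
    (hr : 0 < r) : (r • M).PosDef := by
  constructor
  · have := (psd_smul' hM.posSemidef hr.le).1
    exact this
  · intro x hx
    exact (hM.smul hr).2 hx

theorem renyi_objective_coercive_and_attains_min
    (n : ℕ) (α : ℝ) (hα : α ∈ Set.Ioo (0 : ℝ) 1)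
    (S : Matrix (Fin n) (Fin n) ℝ) (hS : S.PosDef)
    (F : (Fin n → ℝ) → ℝ)
    (hF : ∀ d, F d = Real.log (α • Matrix.diagonal d + (1 - α) • S).det
        - α * Real.log (Matrix.diagonal d).det) :
    (∀ d : ℕ → Fin n → ℝ, (∀ k i, 0 < d k i) → ∀ i : Fin n,
      (Tendsto (fun k => d k i) atTop (nhds 0) ∨
        Tendsto (fun k => d k i) atTop atTop) →
      Tendsto (fun k => F (d k)) atTop atTop) ∧
    (∃ d : Fin n → ℝ, (∀ i, 0 < d i) ∧
      ∀ d' : Fin n → ℝ, (∀ i, 0 < d' i) → F d ≤ F d') := by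
  obtain ⟨hα0, hα1⟩ := hα
  rcases Nat.eq_zero_or_pos n with hn | hn
  · subst hn
    constructor
    · intro d hd i; exact i.elim0
    · refine ⟨fun _ => 1, fun i => i.elim0, fun d' _ => ?_⟩
      simp [hF, Matrix.det_fin_zero]
  haveI : Nonempty (Fin n) := Fin.pos_iff_nonempty.mp hn
  -- the positive constant below the spectrum of `(1-α) • S`
  set c0 : ℝ := Finset.univ.inf' Finset.univ_nonempty hS.1.eigenvalues with hc0def
  have hc0 : 0 < c0 := by
    rw [hc0def, Finset.lt_inf'_iff]
    exact fun i _ => hS.eigenvalues_pos i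
  set c : ℝ := (1 - α) * c0 with hcdef
  have hc : 0 < c := mul_pos (by linarith) hc0
  have hSc : ((1 - α) • S - c • 1).PosSemidef := by
    have h1 : (S - c0 • 1).PosSemidef :=
      conj_unitary_psd hS.1 c0 fun i => Finset.inf'_le _ (Finset.mem_univ i)
    have h2 : (1 - α) • S - c • (1 : Matrix (Fin n) (Fin n) ℝ)
        = (1 - α) • (S - c0 • (1 : Matrix (Fin n) (Fin n) ℝ)) := by
      rw [smul_sub, smul_smul, hcdef]
    rw [h2]
    exact psd_smul' h1 (by linarith)
  set g : ℝ → ℝ := fun t => Real.log (α * t + c) - α * Real.log t with hgdef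
  have hg1 : ∀ t : ℝ, 0 < t → Real.log c - α * Real.log t ≤ g t := by
    intro t ht
    have h := Real.log_le_log hc (by nlinarith : c ≤ α * t + c)
    simp only [hgdef]
    linarith
  have hg2 : ∀ t : ℝ, 0 < t → (1 - α) * Real.log t + Real.log α ≤ g t := by
    intro t ht
    have h := Real.log_le_log (mul_pos hα0 ht) (by linarith : α * t ≤ α * t + c)
    rw [Real.log_mul hα0.ne' ht.ne'] at h
    simp only [hgdef]
    linarith
  set m : ℝ := min (Real.log α) (Real.log c) with hmdef
  have hg3 : ∀ t : ℝ, 0 < t → m ≤ g t := by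
    intro t ht
    rcases le_total t 1 with h | h
    · have h1 := hg1 t ht
      have h2 : Real.log t ≤ 0 := Real.log_nonpos ht.le h
      have h3 : m ≤ Real.log c := min_le_right _ _
      nlinarith
    · have h1 := hg2 t ht
      have h2 : 0 ≤ Real.log t := Real.log_nonneg h
      have h3 : m ≤ Real.log α := min_le_left _ _
      nlinarith
  -- main lower bound
  have hsum : ∀ d : Fin n → ℝ, (∀ i, 0 < d i) → ∑ i, g (d i) ≤ F d := by
    intro d hd
    have hA' : (Matrix.diagonal fun i => α * d i + c).PosDef :=
      Matrix.PosDef.diagonal fun i => by nlinarith [hd i]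
    have hsplit : α • Matrix.diagonal d + (1 - α) • S =
        (Matrix.diagonal fun i => α * d i + c) + ((1 - α) • S - c • 1) := by
      have h : (Matrix.diagonal fun i => α * d i + c)
          = α • Matrix.diagonal d + c • (1 : Matrix (Fin n) (Fin n) ℝ) := by
        ext i j
        by_cases hij : i = j <;>
          simp [Matrix.diagonal, Matrix.one_apply, hij, mul_comm]
      rw [h]
      abel
    have hdet : (Matrix.diagonal fun i => α * d i + c).det
        ≤ (α • Matrix.diagonal d + (1 - α) • S).det := by
      rw [hsplit]; exact det_le_det_add hA' hSc
    have hlogdet : ∑ i, Real.log (α * d i + c)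
        ≤ Real.log (α • Matrix.diagonal d + (1 - α) • S).det := by
      have h := Real.log_le_log hA'.det_pos hdet
      rwa [Matrix.det_diagonal, Real.log_prod (fun i _ => by nlinarith [hd i])] at h
    have hlogdiag : Real.log (Matrix.diagonal d).det = ∑ i, Real.log (d i) := by
      rw [Matrix.det_diagonal, Real.log_prod fun i _ => (hd i).ne']
    rw [hF d, hlogdiag, Finset.mul_sum]
    have hexp : ∑ i, g (d i)
        = ∑ i, Real.log (α * d i + c) - ∑ i, α * Real.log (d i) := by
      rw [← Finset.sum_sub_distrib]
    linarith
  set Cn : ℝ := ((n - 1 : ℕ) : ℝ) * m with hCndef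
  have key : ∀ d : Fin n → ℝ, (∀ i, 0 < d i) → ∀ i, g (d i) + Cn ≤ F d := by
    intro d hd i
    have h1 : g (d i) + ∑ j ∈ Finset.univ.erase i, g (d j) = ∑ j, g (d j) :=
      Finset.add_sum_erase Finset.univ (fun j => g (d j)) (Finset.mem_univ i)
    have h2 : ((Finset.univ.erase i).card : ℝ) * m
        ≤ ∑ j ∈ Finset.univ.erase i, g (d j) := by
      have h := Finset.card_nsmul_le_sum (Finset.univ.erase i) (fun j => g (d j)) m
        fun j _ => hg3 _ (hd j)
      simpa [nsmul_eq_mul] using h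
    have h3 : (Finset.univ.erase i).card = n - 1 := by
      rw [Finset.card_erase_of_mem (Finset.mem_univ i), Finset.card_univ, Fintype.card_fin]
    rw [h3] at h2
    have h4 := hsum d hd
    rw [hCndef]
    linarith
  constructor
  · -- coercivity
    intro d hd i hi
    have hbound : ∀ k, g (d k i) + Cn ≤ F (d k) := fun k => key (d k) (hd k) i
    have hgi : Tendsto (fun k => g (d k i)) atTop atTop := by
      rcases hi with h0 | hT
      · have hpos : Tendsto (fun k => d k i) atTop (nhdsWithin 0 (Set.Ioi 0)) :=
          tendsto_nhdsWithin_of_tendsto_nhds_of_eventually_within _ h0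
            (Eventually.of_forall fun k => hd k i)
        have hlog : Tendsto (fun k => Real.log (d k i)) atTop atBot :=
          Real.tendsto_log_nhdsGT_zero.comp hpos
        have hl2 : Tendsto (fun k => -(α * Real.log (d k i))) atTop atTop := by
          have h := (tendsto_const_mul_atBot_of_pos hα0).mpr hlog
          exact tendsto_neg_atBot_atTop.comp h
        have hl1 : Tendsto (fun k => Real.log (α * d k i + c)) atTop (nhds (Real.log c)) := by
          have harg : Tendsto (fun k => α * d k i + c) atTop (nhds c) := by
            have h := (h0.const_mul α).add_const c
            simpa using h
          exact (Real.continuousAt_log hc.ne').tendsto.comp harg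
        have := hl1.add_atTop hl2
        simp only [hgdef, sub_eq_add_neg]
        exact this
      · have hlog : Tendsto (fun k => Real.log (d k i)) atTop atTop :=
          Real.tendsto_log_atTop.comp hT
        have hlb : Tendsto (fun k => (1 - α) * Real.log (d k i) + Real.log α) atTop atTop :=
          tendsto_atTop_add_const_right _ _ (hlog.const_mul_atTop (by linarith))
        exact tendsto_atTop_mono (fun k => hg2 _ (hd k i)) hlb
    exact tendsto_atTop_mono hbound (tendsto_atTop_add_const_right _ _ hgi)
  · -- existence of a minimizer
    set F1 : ℝ := F (fun _ => 1) with hF1def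
    set K : ℝ := F1 - Cn with hKdef
    set ε : ℝ := min 1 (Real.exp ((Real.log c - K) / α)) with hεdef
    set Mx : ℝ := max 1 (Real.exp ((K - Real.log α) / (1 - α))) with hMxdef
    have hε : 0 < ε := lt_min one_pos (Real.exp_pos _)
    have hout : ∀ t : ℝ, 0 < t → (t < ε ∨ Mx < t) → K < g t := by
      intro t ht h
      rcases h with h | h
      · have h1 : t < Real.exp ((Real.log c - K) / α) :=
          lt_of_lt_of_le h (min_le_right _ _)
        have h2 : Real.log t < (Real.log c - K) / α := by
          have hh := Real.log_lt_log ht h1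
          rwa [Real.log_exp] at hh
        rw [lt_div_iff₀ hα0] at h2
        have := hg1 t ht
        linarith
      · have h1 : Real.exp ((K - Real.log α) / (1 - α)) < t :=
          lt_of_le_of_lt (le_max_right _ _) h
        have h2 : (K - Real.log α) / (1 - α) < Real.log t := by
          have hh := Real.log_lt_log (Real.exp_pos _) h1
          rwa [Real.log_exp] at hh
        rw [div_lt_iff₀ (by linarith : (0:ℝ) < 1 - α)] at h2
        have := hg2 t ht
        linarith
    have hone : (fun _ => (1:ℝ)) ∈ Set.Icc (fun _ : Fin n => ε) (fun _ => Mx) :=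
      ⟨fun i => min_le_left _ _, fun i => le_max_left _ _⟩
    have hcont : ContinuousOn F (Set.Icc (fun _ : Fin n => ε) (fun _ => Mx)) := by
      have hFeq : F = fun d => Real.log (α • Matrix.diagonal d + (1 - α) • S).det
          - α * Real.log (Matrix.diagonal d).det := funext hF
      rw [hFeq]
      intro d hd
      have hdpos : ∀ i, 0 < d i := fun i => lt_of_lt_of_le hε (hd.1 i)
      apply ContinuousAt.continuousWithinAt
      have hc1 : Continuous fun d : Fin n → ℝ =>
          (α • Matrix.diagonal d + (1 - α) • S).det :=
        (((continuous_id.matrix_diagonal).const_smul α).add continuous_const).matrix_det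
      have hc2 : Continuous fun d : Fin n → ℝ => (Matrix.diagonal d).det :=
        (continuous_id.matrix_diagonal).matrix_det
      have hdet1 : 0 < (α • Matrix.diagonal d + (1 - α) • S).det := by
        have hpd : (α • Matrix.diagonal d + (1 - α) • S).PosDef := by
          have h1 : (α • Matrix.diagonal d).PosDef :=
            posdef_smul' (Matrix.PosDef.diagonal hdpos) hα0
          have h2 : ((1 - α) • S).PosDef := posdef_smul' hS (by linarith)
          exact h1.add h2
        exact hpd.det_pos
      have hdet2 : 0 < (Matrix.diagonal d).det := (Matrix.PosDef.diagonal hdpos).det_pos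
      exact ((hc1.continuousAt).log hdet1.ne').sub
        (((hc2.continuousAt).log hdet2.ne').const_mul α)
    obtain ⟨dm, hdm, hmin⟩ := (isCompact_Icc (a := fun _ : Fin n => ε)
      (b := fun _ => Mx)).exists_isMinOn ⟨_, hone⟩ hcont
    refine ⟨dm, fun i => lt_of_lt_of_le hε (hdm.1 i), ?_⟩
    intro d' hd'
    by_cases hmem : d' ∈ Set.Icc (fun _ : Fin n => ε) (fun _ => Mx)
    · exact hmin hmem
    · have hex : ∃ i, d' i < ε ∨ Mx < d' i := by
        by_contra hno
        push_neg at hno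
        exact hmem ⟨fun i => (hno i).1, fun i => (hno i).2⟩
      obtain ⟨i, hi⟩ := hex
      have h1 : K < g (d' i) := hout _ (hd' i) hi
      have h2 := key d' hd' i
      have h3 : F dm ≤ F1 := hmin hone
      rw [hKdef] at h1
      linarith
end
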